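/- Let λ be a nonzero finite measure on a measurable space S and let U : S → ℝ be a bounded measurable function with essential infimum m = essinf_λ U. Then for every ε > 0 and every β ≥ 0, the Gibbs measure μ_β(A) = (∫_A e^{−βU} dλ)/(∫_S e^{−βU} dλ) satisfies the quantitative bound μ_β({U > m + ε}) ≤ (λ({U > m + ε}) / λ({U ≤ m + ε/2})) · e^{−βε/2}. -/

import Mathlib

open MeasureTheory

/-- Quantitative Gibbs concentration bound: for a nonzero finite measure `λ`, a bounded
measurable energy `U` with essential infimum `m`, every `ε > 0` and `β ≥ 0`, the Gibbs
measure satisfies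
`μ_β({U > m + ε}) ≤ (λ({U > m + ε})/λ({U ≤ m + ε/2})) · e^{−βε/2}`. -/
theorem stmt11 {S : Type*} [MeasurableSpace S] (lam : Measure S) [IsFiniteMeasure lam]
    (hlam : lam ≠ 0) (U : S → ℝ) (hU : Measurable U) (M : ℝ) (hM : ∀ x, |U x| ≤ M)
    (ε : ℝ) (hε : 0 < ε) (β : ℝ) (hβ : 0 ≤ β) :
    (∫ x in {x | essInf U lam + ε < U x}, Real.exp (-β * U x) ∂lam) /
        (∫ x, Real.exp (-β * U x) ∂lam) ≤
      (lam {x | essInf U lam + ε < U x}).toReal /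
          (lam {x | U x ≤ essInf U lam + ε / 2}).toReal *
        Real.exp (-β * ε / 2) := by
  set m := essInf U lam with hm
  set A := {x | m + ε < U x} with hA
  set B := {x | U x ≤ m + ε / 2} with hB
  have hAmeas : MeasurableSet A := measurableSet_lt measurable_const hU
  have hBmeas : MeasurableSet B := measurableSet_le hU measurable_const
  -- integrability of x ↦ exp (-β * U x)
  have hmeas : Measurable fun x => Real.exp (-β * U x) := (hU.const_mul (-β)).exp
  have hbound : ∀ x, ‖Real.exp (-β * U x)‖ ≤ Real.exp (β * M) := by
    intro x
    rw [Real.norm_eq_abs, abs_of_pos (Real.exp_pos _)]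
    apply Real.exp_le_exp.2
    have := (abs_le.1 (hM x)).1
    nlinarith
  have hint : Integrable (fun x => Real.exp (-β * U x)) lam :=
    ⟨hmeas.aestronglyMeasurable,
      HasFiniteIntegral.of_bounded (C := Real.exp (β * M)) (.of_forall hbound)⟩
  have hpos : ∀ x, 0 < Real.exp (-β * U x) := fun x => Real.exp_pos _
  -- λ(B) > 0
  have hBpos : 0 < lam B := by
    rcases eq_or_lt_of_le (zero_le : 0 ≤ lam B) with h | h
    · exfalso
      have hmem : lam {x | U x < m + ε / 2} = 0 :=
        measure_mono_null (s := {x | U x < m + ε / 2}) (t := B) (fun x (hx : U x < m + ε / 2) => show U x ≤ m + ε / 2 from le_of_lt hx) h.symm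
      have hbdd : BddAbove {a : ℝ | lam {x | U x < a} = 0} := by
        refine ⟨M + 1, fun a ha => ?_⟩
        by_contra hcon
        push_neg at hcon
        have ha' : lam {x | U x < a} = 0 := ha
        have huniv : {x | U x < a} = Set.univ := by
          ext x; simp only [Set.mem_setOf_eq, Set.mem_univ, iff_true]
          have := (abs_le.1 (hM x)).2
          linarith
        rw [huniv] at ha'
        exact (Measure.measure_univ_ne_zero.2 hlam) ha'
      have h2 : essInf U lam = sSup {a : ℝ | lam {x | U x < a} = 0} :=
        essInf_eq_sSup lam U
      have h3 : m + ε / 2 ≤ sSup {a : ℝ | lam {x | U x < a} = 0} :=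
        le_csSup hbdd hmem
      rw [← h2] at h3
      rw [← hm] at h3
      linarith
    · exact h
  have hBne : lam B ≠ ⊤ := measure_ne_top _ _
  have hBr : 0 < (lam B).toReal := ENNReal.toReal_pos hBpos.ne' hBne
  -- denominator lower bound
  have hden : (lam B).toReal * Real.exp (-β * (m + ε / 2)) ≤ ∫ x, Real.exp (-β * U x) ∂lam := by
    have h1 : (∫ _x in B, Real.exp (-β * (m + ε / 2)) ∂lam) ≤
        ∫ x in B, Real.exp (-β * U x) ∂lam := by
      refine setIntegral_mono_on (integrableOn_const (measure_ne_top lam B))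
        hint.integrableOn hBmeas (fun x hx => ?_)
      have h4 : U x ≤ m + ε / 2 := hx
      have := mul_le_mul_of_nonneg_left h4 hβ
      exact Real.exp_le_exp.2 (by linarith)
    rw [setIntegral_const, smul_eq_mul] at h1
    exact h1.trans (setIntegral_le_integral hint (.of_forall fun x => (hpos x).le))
  -- numerator upper bound
  have hnum : (∫ x in A, Real.exp (-β * U x) ∂lam) ≤
      (lam A).toReal * Real.exp (-β * (m + ε)) := by
    have h1 : (∫ x in A, Real.exp (-β * U x) ∂lam) ≤
        ∫ _x in A, Real.exp (-β * (m + ε)) ∂lam := by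
      refine setIntegral_mono_on hint.integrableOn
        (integrableOn_const (measure_ne_top lam A)) hAmeas (fun x hx => ?_)
      have h4 : m + ε ≤ U x := le_of_lt hx
      have := mul_le_mul_of_nonneg_left h4 hβ
      exact Real.exp_le_exp.2 (by linarith)
    rwa [setIntegral_const, smul_eq_mul] at h1
  have hdpos : 0 < (lam B).toReal * Real.exp (-β * (m + ε / 2)) :=
    mul_pos hBr (Real.exp_pos _)
  have key : (∫ x in A, Real.exp (-β * U x) ∂lam) / (∫ x, Real.exp (-β * U x) ∂lam) ≤
      ((lam A).toReal * Real.exp (-β * (m + ε))) /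
        ((lam B).toReal * Real.exp (-β * (m + ε / 2))) :=
    div_le_div₀ (by positivity) hnum hdpos hden
  refine key.trans (le_of_eq ?_)
  rw [mul_div_mul_comm, ← Real.exp_sub]
  congr 1
  congr 1
  ring
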